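/- For a stream segment of length n and parameter s with 0 < s ≤ n, the expected number of elements sampled by the reversed reservoir sampling process—where the i-th most recent element is sampled independently with probability min(1, s/i)—is at most s + s·ln(n/s). -/

import Mathlib

open Finset

lemma tail_sum_le (s : ℕ) (hs : 0 < s) : ∀ n, s ≤ n →
    ∑ i ∈ Finset.Ioc s n, (s : ℝ) / i ≤ s * (Real.log n - Real.log s) := by
  intro n hn
  induction n with
  | zero => simp [Nat.le_zero.mp hn] at hs ⊢
  | succ m ih =>
    rcases Nat.lt_or_ge m s with h | h
    · have : s = m + 1 := le_antisymm hn h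
      subst this
      simp
    · have hm : (0:ℝ) < m := by exact_mod_cast lt_of_lt_of_le hs h
      have hstep : (1:ℝ) / (m+1) ≤ Real.log (m+1) - Real.log m := by
        have hx : (0:ℝ) < ((m:ℝ)+1)/m := by positivity
        have := Real.one_sub_inv_le_log_of_pos hx
        rw [Real.log_div (by positivity) (ne_of_gt hm)] at this
        have hinv : (((m:ℝ)+1)/m)⁻¹ = m/(m+1) := by
          rw [inv_div]
        rw [hinv] at this
        have : 1 - (m:ℝ)/(m+1) = 1/(m+1) := by field_simp; ring
        linarith [Real.one_sub_inv_le_log_of_pos hx, this]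
      have hsum : ∑ i ∈ Finset.Ioc s (m+1), (s : ℝ) / i
          = (∑ i ∈ Finset.Ioc s m, (s : ℝ) / i) + s / (m+1) := by
        rw [Finset.sum_Ioc_succ_top h]
        push_cast
        ring_nf
      have h2 : (s:ℝ)/(m+1) ≤ s * (Real.log (m+1) - Real.log m) := by
        have hs' : (0:ℝ) ≤ s := by positivity
        calc (s:ℝ)/(m+1) = s * (1/(m+1)) := by ring
        _ ≤ s * (Real.log (m+1) - Real.log m) := by
            exact mul_le_mul_of_nonneg_left hstep hs'
      have := ih h
      rw [hsum]
      push_cast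
      linarith

theorem expected_samples_simpleRR (n s : ℕ) (hs : 0 < s) (hsn : s ≤ n) :
    ∑ i ∈ Finset.Icc 1 n, min 1 ((s : ℝ) / i) ≤ s + s * Real.log (n / s) := by
  have hsplit : Finset.Icc 1 n = Finset.Icc 1 s ∪ Finset.Ioc s n := by
    ext a; simp only [Finset.mem_Icc, Finset.mem_union, Finset.mem_Ioc]; omega
  have hdisj : Disjoint (Finset.Icc 1 s) (Finset.Ioc s n) := by
    simp [Finset.disjoint_left]
    intro a _ ha2 ha3
    omega
  rw [hsplit, Finset.sum_union hdisj]
  have h1 : ∑ i ∈ Finset.Icc 1 s, min 1 ((s : ℝ) / i) = s := by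
    rw [Finset.sum_congr rfl (g := fun _ => (1:ℝ))]
    · simp
    · intro i hi
      simp only [Finset.mem_Icc] at hi
      have hi0 : (0:ℝ) < i := by exact_mod_cast hi.1
      have : (1:ℝ) ≤ (s:ℝ)/i := by
        rw [le_div_iff₀ hi0]
        simp
        exact_mod_cast hi.2
      simp [min_eq_left this]
  have h2 : ∑ i ∈ Finset.Ioc s n, min 1 ((s : ℝ) / i)
      = ∑ i ∈ Finset.Ioc s n, (s : ℝ) / i := by
    apply Finset.sum_congr rfl
    intro i hi
    simp only [Finset.mem_Ioc] at hi
    have hi0 : (0:ℝ) < i := by exact_mod_cast lt_of_le_of_lt (Nat.zero_le s) hi.1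
    have : (s:ℝ)/i ≤ 1 := by
      rw [div_le_one hi0]
      exact_mod_cast hi.1.le
    simp [min_eq_right this]
  rw [h1, h2]
  have := tail_sum_le s hs n hsn
  have hlog : Real.log ((n:ℝ)/s) = Real.log n - Real.log s := by
    have h1 : (n:ℝ) ≠ 0 := by exact_mod_cast Nat.pos_of_ne_zero (by omega) |>.ne'
    have h2 : (s:ℝ) ≠ 0 := by exact_mod_cast hs.ne'
    rw [Real.log_div h1 h2]
  push_cast
  rw [hlog]
  linarith
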